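/- arXiv:1803.06093 — 3 statements merged into one kernel-verified Lean document; each statement's English description precedes it below -/
import Mathlib

section
/- Let A ∈ ℝ be arbitrary and suppose that R(ξ,ξ,ξ,ξ) ≤ A·g(ξ,ξ)² for every ξ ∈ V. Then for any finite collection of vectors ξ_1,…,ξ_m ∈ V that are mutually orthogonal with respect to g, one has Σ_{α,β=1}^m R(ξ_α,ξ_α,ξ_β,ξ_β) ≤ (A/2)·[ (Σ_{α=1}^m g(ξ_α,ξ_α))² + Σ_{α=1}^m g(ξ_α,ξ_α)² ]. (This is Royden's averaging inequality, valid for any real upper bound A on the holomorphic sectional curvature.) -/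
noncomputable def roydenEps : ZMod 4 → ℂ := fun j => Complex.I ^ j.val

lemma roydenEps_add (a b : ZMod 4) : roydenEps (a + b) = roydenEps a * roydenEps b := by
  unfold roydenEps
  rw [← pow_add]
  rw [ZMod.val_add]
  conv_rhs => rw [← Nat.div_add_mod (a.val + b.val) 4]
  rw [pow_add, pow_mul]
  norm_num [show Complex.I ^ 4 = 1 by rw [show (4:ℕ) = 2*2 from rfl, pow_mul, Complex.I_sq]; norm_num]

lemma roydenEps_zero : roydenEps 0 = 1 := by simp [roydenEps]

lemma roydenEps_conj (j : ZMod 4) : (starRingEnd ℂ) (roydenEps j) = roydenEps (-j) := by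
  have h0 : ZMod.val (0 : ZMod 4) = 0 := rfl
  have h1 : ZMod.val (1 : ZMod 4) = 1 := rfl
  have h2 : ZMod.val (2 : ZMod 4) = 2 := rfl
  have h3 : ZMod.val (3 : ZMod 4) = 3 := rfl
  rcases (by revert j; decide : ∀ j : ZMod 4, j = 0 ∨ j = 1 ∨ j = 2 ∨ j = 3) j with rfl | rfl | rfl | rfl <;>
    simp [roydenEps, Complex.conj_I, show -(0 : ZMod 4) = 0 from rfl,
      show -(1 : ZMod 4) = 3 from rfl, show -(2 : ZMod 4) = 2 from rfl,
      show -(3 : ZMod 4) = 1 from rfl, h0, h1, h2, h3, pow_succ, Complex.I_sq] <;> ring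

lemma roydenEps_ne_one (j : ZMod 4) (h : j ≠ 0) : roydenEps j ≠ 1 := by
  have h1 : ZMod.val (1 : ZMod 4) = 1 := rfl
  have h2 : ZMod.val (2 : ZMod 4) = 2 := rfl
  have h3 : ZMod.val (3 : ZMod 4) = 3 := rfl
  rcases (by revert j; decide : ∀ j : ZMod 4, j = 0 ∨ j = 1 ∨ j = 2 ∨ j = 3) j with rfl | rfl | rfl | rfl <;> simp_all [roydenEps, Complex.ext_iff, pow_succ, Complex.I_sq] <;> norm_num

lemma roydenEps_mul_conj (j : ZMod 4) : roydenEps j * (starRingEnd ℂ) (roydenEps j) = 1 := by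
  rw [roydenEps_conj, ← roydenEps_add, add_neg_cancel, roydenEps_zero]

lemma royden_char_sum (m : ℕ) (α β γ δ : Fin m) :
    ∑ k : Fin m → ZMod 4, roydenEps (k α - k β + k γ - k δ) =
      if (α = β ∧ γ = δ) ∨ (α = δ ∧ β = γ) then ((4 : ℂ) ^ m) else 0 := by
  split_ifs with h
  · have hz : ∀ k : Fin m → ZMod 4, k α - k β + k γ - k δ = 0 := by
      intro k
      rcases h with ⟨h1, h2⟩ | ⟨h1, h2⟩ <;> subst h1 <;> subst h2 <;> ring
    simp only [hz, roydenEps_zero]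
    rw [Finset.sum_const, Finset.card_univ, Fintype.card_fun]
    simp [ZMod.card]
  · obtain ⟨u, hu⟩ : ∃ u : Fin m → ZMod 4, u α - u β + u γ - u δ ≠ 0 := by
      by_cases hαδ : α = δ
      · subst hαδ
        have hβγ : β ≠ γ := fun hbg => h (Or.inr ⟨rfl, hbg⟩)
        refine ⟨fun μ => if μ = γ then 1 else 0, ?_⟩
        simp [if_neg hβγ]
        decide
      · by_cases hαβ : α = β
        · subst hαβ
          have hγδ : γ ≠ δ := fun hgd => h (Or.inl ⟨rfl, hgd⟩)
          refine ⟨fun μ => if μ = γ then 1 else 0, ?_⟩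
          simp [if_neg (fun hdg : δ = γ => hγδ hdg.symm)]
          decide
        · refine ⟨fun μ => if μ = α then 1 else 0, ?_⟩
          simp only [if_pos rfl, if_neg (fun hba : β = α => hαβ hba.symm),
            if_neg (fun hda : δ = α => hαδ hda.symm)]
          by_cases hγα : γ = α <;> simp [hγα] <;> decide
    have key : ∑ k : Fin m → ZMod 4, roydenEps (k α - k β + k γ - k δ) =
        roydenEps (u α - u β + u γ - u δ) *
          ∑ k : Fin m → ZMod 4, roydenEps (k α - k β + k γ - k δ) := by
      rw [Finset.mul_sum]
      rw [← Equiv.sum_comp (Equiv.addRight u)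
        (fun k : Fin m → ZMod 4 => roydenEps (k α - k β + k γ - k δ))]
      refine Finset.sum_congr rfl fun k _ => ?_
      have : (Equiv.addRight u k) α - (Equiv.addRight u k) β + (Equiv.addRight u k) γ
          - (Equiv.addRight u k) δ
          = (u α - u β + u γ - u δ) + (k α - k β + k γ - k δ) := by
        simp [Equiv.addRight]; ring
      rw [this, roydenEps_add]
    have hne : roydenEps (u α - u β + u γ - u δ) ≠ 1 := roydenEps_ne_one _ hu
    by_contra hS
    set S := ∑ k : Fin m → ZMod 4, roydenEps (k α - k β + k γ - k δ) with hSdef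
    set e := roydenEps (u α - u β + u γ - u δ) with he
    have h2 : S * (e - 1) = 0 := by linear_combination -key
    rcases mul_eq_zero.mp h2 with h1 | h1
    · exact hS h1
    · exact hne (by linear_combination h1)


/-- **Royden's averaging inequality.**
Let `V` be an `n`-dimensional complex vector space (`n ≥ 1`) with a Hermitian inner
product `g`, and let `R` be a Kähler curvature-type tensor on `V`. If `A ∈ ℝ` is any
real number such that `R(ξ,ξ,ξ,ξ) ≤ A·g(ξ,ξ)²` for every `ξ ∈ V`, then for any finite
collection of vectors `ξ_1,…,ξ_m ∈ V` that are mutually orthogonal with respect to `g`,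
`Σ_{α,β} R(ξ_α,ξ_α,ξ_β,ξ_β) ≤ (A/2)·[(Σ_α g(ξ_α,ξ_α))² + Σ_α g(ξ_α,ξ_α)²]`. -/
theorem royden_averaging_inequality
    (V : Type*) [AddCommGroup V] [Module ℂ V] [FiniteDimensional ℂ V]
    (n : ℕ) (hn : 1 ≤ n) (hdim : Module.finrank ℂ V = n)
    (g : V → V → ℂ)
    -- `g` is a Hermitian inner product: linear in the first argument,
    -- conjugate-linear in the second, positive definite
    (hg_add : ∀ x y z : V, g (x + y) z = g x z + g y z)
    (hg_smul : ∀ (a : ℂ) (x z : V), g (a • x) z = a * g x z)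
    (hg_conj : ∀ x y : V, g x y = starRingEnd ℂ (g y x))
    (hg_pos : ∀ x : V, x ≠ 0 → 0 < (g x x).re)
    -- `R` is a Kähler curvature-type tensor: ℂ-linear in the 1st and 3rd arguments,
    -- conjugate-linear in the 2nd and 4th arguments
    (R : V → V → V → V → ℂ)
    (hR_add1 : ∀ x x' y z w : V, R (x + x') y z w = R x y z w + R x' y z w)
    (hR_smul1 : ∀ (a : ℂ) (x y z w : V), R (a • x) y z w = a * R x y z w)
    (hR_add2 : ∀ x y y' z w : V, R x (y + y') z w = R x y z w + R x y' z w)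
    (hR_smul2 : ∀ (a : ℂ) (x y z w : V), R x (a • y) z w = starRingEnd ℂ a * R x y z w)
    (hR_add3 : ∀ x y z z' w : V, R x y (z + z') w = R x y z w + R x y z' w)
    (hR_smul3 : ∀ (a : ℂ) (x y z w : V), R x y (a • z) w = a * R x y z w)
    (hR_add4 : ∀ x y z w w' : V, R x y z (w + w') = R x y z w + R x y z w')
    (hR_smul4 : ∀ (a : ℂ) (x y z w : V), R x y z (a • w) = starRingEnd ℂ a * R x y z w)
    -- Kähler symmetries
    (hR_sym13 : ∀ x y z w : V, R x y z w = R z y x w)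
    (hR_sym24 : ∀ x y z w : V, R x y z w = R x w z y)
    (hR_conj : ∀ x y z w : V, R x y z w = starRingEnd ℂ (R y x w z))
    -- holomorphic sectional curvature bounded above by the (arbitrary) real constant `A`
    (A : ℝ)
    (hHSC : ∀ ξ : V, (R ξ ξ ξ ξ).re ≤ A * ((g ξ ξ).re) ^ 2)
    -- a finite collection of vectors, mutually orthogonal with respect to `g`
    (m : ℕ) (ξ : Fin m → V)
    (hortho : ∀ α β : Fin m, α ≠ β → g (ξ α) (ξ β) = 0) :
    (∑ α : Fin m, ∑ β : Fin m, R (ξ α) (ξ α) (ξ β) (ξ β)).re ≤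
      (A / 2) * ((∑ α : Fin m, (g (ξ α) (ξ α)).re) ^ 2 +
        ∑ α : Fin m, ((g (ξ α) (ξ α)).re) ^ 2) := by

  classical
  -- derived sesquilinearity of g in the second slot
  have hg_add2 : ∀ x y z : V, g x (y + z) = g x y + g x z := by
    intro x y z
    rw [hg_conj x (y + z), hg_add, map_add, ← hg_conj, ← hg_conj]
  have hg_smul2 : ∀ (a : ℂ) (x y : V), g x (a • y) = starRingEnd ℂ a * g x y := by
    intro a x y
    rw [hg_conj x (a • y), hg_smul, map_mul, ← hg_conj]
  -- expansion lemmas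
  have exp1 : ∀ (c : Fin m → ℂ) (y z w : V),
      R (∑ α, c α • ξ α) y z w = ∑ α, c α * R (ξ α) y z w := by
    intro c y z w
    have key := map_sum (AddMonoidHom.mk' (fun v => R v y z w) (fun a b => hR_add1 a b y z w))
      (fun α => c α • ξ α) Finset.univ
    simp only [AddMonoidHom.mk'_apply] at key
    rw [key]
    exact Finset.sum_congr rfl fun α _ => hR_smul1 _ _ _ _ _
  have exp2 : ∀ (c : Fin m → ℂ) (x z w : V),
      R x (∑ β, c β • ξ β) z w = ∑ β, starRingEnd ℂ (c β) * R x (ξ β) z w := by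
    intro c x z w
    have key := map_sum (AddMonoidHom.mk' (fun v => R x v z w) (fun a b => hR_add2 x a b z w))
      (fun β => c β • ξ β) Finset.univ
    simp only [AddMonoidHom.mk'_apply] at key
    rw [key]
    exact Finset.sum_congr rfl fun β _ => hR_smul2 _ _ _ _ _
  have exp3 : ∀ (c : Fin m → ℂ) (x y w : V),
      R x y (∑ γ, c γ • ξ γ) w = ∑ γ, c γ * R x y (ξ γ) w := by
    intro c x y w
    have key := map_sum (AddMonoidHom.mk' (fun v => R x y v w) (fun a b => hR_add3 x y a b w))
      (fun γ => c γ • ξ γ) Finset.univ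
    simp only [AddMonoidHom.mk'_apply] at key
    rw [key]
    exact Finset.sum_congr rfl fun γ _ => hR_smul3 _ _ _ _ _
  have exp4 : ∀ (c : Fin m → ℂ) (x y z : V),
      R x y z (∑ δ, c δ • ξ δ) = ∑ δ, starRingEnd ℂ (c δ) * R x y z (ξ δ) := by
    intro c x y z
    have key := map_sum (AddMonoidHom.mk' (fun v => R x y z v) (fun a b => hR_add4 x y z a b))
      (fun δ => c δ • ξ δ) Finset.univ
    simp only [AddMonoidHom.mk'_apply] at key
    rw [key]
    exact Finset.sum_congr rfl fun δ _ => hR_smul4 _ _ _ _ _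
  have gexp1 : ∀ (c : Fin m → ℂ) (y : V),
      g (∑ α, c α • ξ α) y = ∑ α, c α * g (ξ α) y := by
    intro c y
    have key := map_sum (AddMonoidHom.mk' (fun v => g v y) (fun a b => hg_add a b y))
      (fun α => c α • ξ α) Finset.univ
    simp only [AddMonoidHom.mk'_apply] at key
    rw [key]
    exact Finset.sum_congr rfl fun α _ => hg_smul _ _ _
  have gexp2 : ∀ (c : Fin m → ℂ) (x : V),
      g x (∑ β, c β • ξ β) = ∑ β, starRingEnd ℂ (c β) * g x (ξ β) := by
    intro c x
    have key := map_sum (AddMonoidHom.mk' (fun v => g x v) (fun a b => hg_add2 x a b))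
      (fun β => c β • ξ β) Finset.univ
    simp only [AddMonoidHom.mk'_apply] at key
    rw [key]
    exact Finset.sum_congr rfl fun β _ => hg_smul2 _ _ _
  set K := (Fin m → ZMod 4)
  set ζ : K → V := fun k => ∑ α, roydenEps (k α) • ξ α with hζ
  -- norm of ζ
  have hgζ : ∀ k : K, (g (ζ k) (ζ k)) = ∑ α, g (ξ α) (ξ α) := by
    intro k
    rw [hζ]
    simp only [gexp1, gexp2, Finset.mul_sum]
    refine Finset.sum_congr rfl fun α _ => ?_
    rw [Finset.sum_eq_single α]
    · rw [← mul_assoc, roydenEps_mul_conj, one_mul]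
    · intro β _ hβ
      rw [hortho α β (fun h => hβ h.symm)]
      ring
    · intro h; exact absurd (Finset.mem_univ α) h
  -- expansion of R on ζ
  have hζR : ∀ k : K, R (ζ k) (ζ k) (ζ k) (ζ k) =
      ∑ α, ∑ β, ∑ γ, ∑ δ,
        (roydenEps (k α) * starRingEnd ℂ (roydenEps (k β)) * roydenEps (k γ) *
          starRingEnd ℂ (roydenEps (k δ))) * R (ξ α) (ξ β) (ξ γ) (ξ δ) := by
    intro k
    rw [hζ]
    simp only [exp1, exp2, exp3, exp4, Finset.mul_sum]
    refine Finset.sum_congr rfl fun α _ => ?_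
    refine Finset.sum_congr rfl fun β _ => ?_
    refine Finset.sum_congr rfl fun γ _ => ?_
    refine Finset.sum_congr rfl fun δ _ => ?_
    ring
  set S1 : ℂ := ∑ α, ∑ γ, R (ξ α) (ξ α) (ξ γ) (ξ γ) with hS1
  set D : ℂ := ∑ α, R (ξ α) (ξ α) (ξ α) (ξ α) with hDdef
  have hT : ∑ k : K, R (ζ k) (ζ k) (ζ k) (ζ k) = (4:ℂ)^m * (S1 + S1 - D) := by
    calc ∑ k : K, R (ζ k) (ζ k) (ζ k) (ζ k)
        = ∑ k : K, ∑ α, ∑ β, ∑ γ, ∑ δ,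
            (roydenEps (k α) * starRingEnd ℂ (roydenEps (k β)) * roydenEps (k γ) *
              starRingEnd ℂ (roydenEps (k δ))) * R (ξ α) (ξ β) (ξ γ) (ξ δ) :=
          Finset.sum_congr rfl fun k _ => hζR k
      _ = ∑ α, ∑ β, ∑ γ, ∑ δ, (∑ k : K,
            roydenEps (k α) * starRingEnd ℂ (roydenEps (k β)) * roydenEps (k γ) *
              starRingEnd ℂ (roydenEps (k δ))) * R (ξ α) (ξ β) (ξ γ) (ξ δ) := by
          rw [Finset.sum_comm]
          refine Finset.sum_congr rfl fun α _ => ?_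
          rw [Finset.sum_comm]
          refine Finset.sum_congr rfl fun β _ => ?_
          rw [Finset.sum_comm]
          refine Finset.sum_congr rfl fun γ _ => ?_
          rw [Finset.sum_comm]
          refine Finset.sum_congr rfl fun δ _ => ?_
          rw [Finset.sum_mul]
      _ = ∑ α, ∑ β, ∑ γ, ∑ δ,
            (if (α = β ∧ γ = δ) ∨ (α = δ ∧ β = γ) then ((4:ℂ)^m) else 0) *
              R (ξ α) (ξ β) (ξ γ) (ξ δ) := by
          refine Finset.sum_congr rfl fun α _ => Finset.sum_congr rfl fun β _ =>
            Finset.sum_congr rfl fun γ _ => Finset.sum_congr rfl fun δ _ => ?_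
          rw [← royden_char_sum m α β γ δ]
          congr 1
          refine Finset.sum_congr rfl fun k _ => ?_
          rw [roydenEps_conj, roydenEps_conj, ← roydenEps_add, ← roydenEps_add,
            ← roydenEps_add]
          congr 1
          ring
      _ = (4:ℂ)^m * (S1 + S1 - D) := by
          have point : ∀ α β γ δ : Fin m,
              (if (α = β ∧ γ = δ) ∨ (α = δ ∧ β = γ) then ((4:ℂ)^m) else 0) *
                R (ξ α) (ξ β) (ξ γ) (ξ δ)
              = (4:ℂ)^m *
                ((if γ = δ then (if α = β then R (ξ α) (ξ β) (ξ γ) (ξ δ) else 0) else 0)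
                + (if α = δ then (if β = γ then R (ξ α) (ξ β) (ξ γ) (ξ δ) else 0) else 0)
                - (if γ = δ then (if β = γ then (if α = β then
                    R (ξ α) (ξ β) (ξ γ) (ξ δ) else 0) else 0) else 0)) := by
            intro α β γ δ
            split_ifs <;> first | ring1 | (exfalso; subst_vars; first | omega | tauto)
          simp only [point, ← Finset.mul_sum]
          congr 1
          simp only [Finset.sum_add_distrib, Finset.sum_sub_distrib]
          congr 1
          · congr 1
            · -- first indicator sum = S1
              simp only [Finset.sum_ite_irrel, Finset.sum_ite_eq, Finset.mem_univ, if_true,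
                Finset.sum_const_zero]
              rfl
            · -- second indicator sum
              simp only [Finset.sum_ite_irrel, Finset.sum_ite_eq, Finset.mem_univ, if_true,
                Finset.sum_const_zero]
              rw [hS1]
              exact Finset.sum_congr rfl fun α _ => Finset.sum_congr rfl fun β _ =>
                (hR_sym24 (ξ α) (ξ β) (ξ β) (ξ α)).symm ▸ rfl
          · -- third indicator sum = D
            simp only [Finset.sum_ite_irrel, Finset.sum_ite_eq, Finset.mem_univ, if_true,
              Finset.sum_const_zero]
            rfl
  -- cardinality of the index type
  have hcard : (Finset.univ : Finset K).card = 4 ^ m := by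
    simp [K, Finset.card_univ]
  set G : ℝ := ∑ α, (g (ξ α) (ξ α)).re with hG
  have hζbound : ∀ k : K, (R (ζ k) (ζ k) (ζ k) (ζ k)).re ≤ A * G ^ 2 := by
    intro k
    have h := hHSC (ζ k)
    rwa [hgζ k, Complex.re_sum] at h
  have hTre_le : (∑ k : K, R (ζ k) (ζ k) (ζ k) (ζ k)).re ≤ (4:ℝ)^m * (A * G^2) := by
    rw [Complex.re_sum]
    calc ∑ k : K, (R (ζ k) (ζ k) (ζ k) (ζ k)).re ≤ ∑ _k : K, A * G^2 :=
        Finset.sum_le_sum fun k _ => hζbound k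
      _ = (4:ℝ)^m * (A * G^2) := by
        rw [Finset.sum_const, hcard, nsmul_eq_mul]
        push_cast
        ring
  have hTre_eq : (∑ k : K, R (ζ k) (ζ k) (ζ k) (ζ k)).re
      = (4:ℝ)^m * (S1.re + S1.re - D.re) := by
    rw [hT, show ((4:ℂ)^m) = (((4:ℝ)^m : ℝ) : ℂ) by push_cast; ring,
      Complex.re_ofReal_mul]
    simp [Complex.sub_re, Complex.add_re]
  have hDre : D.re ≤ A * ∑ α, ((g (ξ α) (ξ α)).re)^2 := by
    rw [hDdef, Complex.re_sum, Finset.mul_sum]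
    exact Finset.sum_le_sum fun α _ => hHSC (ξ α)
  have hpow : (0:ℝ) < (4:ℝ)^m := by positivity
  have hmain : S1.re + S1.re - D.re ≤ A * G^2 := by
    have h := hTre_le
    rw [hTre_eq] at h
    exact le_of_mul_le_mul_left h hpow
  linarith [hmain, hDre]
end

section
/- Let n ≥ 1 and let A and B be positive-definite Hermitian n×n complex matrices. Then the traces of B⁻¹A and A⁻¹B and the determinants of A and B are positive real numbers, and trace(B⁻¹A) ≤ (1/(n−1)!) · (trace(A⁻¹B))^{n−1} · det(A)/det(B). -/
open Matrix ComplexOrder Finset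

private lemma binom_aux (k : ℕ) (S a : ℝ) (hS : 0 ≤ S) (ha : 0 ≤ a) :
    S ^ (k+1) + (k+1) * (a * S ^ k) ≤ (S + a) ^ (k+1) := by
  induction k with
  | zero => norm_num
  | succ k ih =>
    have h2 : (S + a) * (S ^ (k+1) + ((k:ℝ)+1) * (a * S ^ k)) ≤ (S + a) ^ (k+2) := by
      have h1 : (S + a) ^ (k+2) = (S + a) * (S + a) ^ (k+1) := by ring
      rw [h1]
      apply mul_le_mul_of_nonneg_left ih (by linarith)
    have expand : (S + a) * (S ^ (k+1) + ((k:ℝ)+1) * (a * S ^ k))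
        = S ^ (k+2) + ((k:ℝ)+2) * (a * S ^ (k+1)) + ((k:ℝ)+1) * (a^2 * S^k) := by ring
    have hnn : (0:ℝ) ≤ ((k:ℝ)+1) * (a^2 * S^k) := by positivity
    have : S ^ (k+2) + ((k:ℝ)+2) * (a * S ^ (k+1)) ≤ (S + a) ^ (k+2) := by linarith
    push_cast
    convert this using 2 <;> push_cast <;> ring

private lemma esymm_le {ι : Type*} [DecidableEq ι] (f : ι → ℝ) :
    ∀ s : Finset ι, (∀ i ∈ s, 0 ≤ f i) →
    ∀ k, (k.factorial : ℝ) * ∑ t ∈ s.powersetCard k, ∏ i ∈ t, f i ≤ (∑ i ∈ s, f i) ^ k := by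
  intro s
  induction s using Finset.induction_on with
  | empty =>
    intro _ k
    cases k with
    | zero => simp
    | succ k =>
      rw [Finset.powersetCard_eq_empty.mpr (by simp)]
      simp
  | @insert a s ha ih =>
    intro hf k
    have hfa : 0 ≤ f a := hf a (mem_insert_self a s)
    have hfs : ∀ i ∈ s, 0 ≤ f i := fun i hi => hf i (mem_insert_of_mem hi)
    have hSnn : 0 ≤ ∑ i ∈ s, f i := Finset.sum_nonneg hfs
    cases k with
    | zero => simp
    | succ k =>
      rw [Finset.powersetCard_succ_insert ha, Finset.sum_union, Finset.sum_image]
      · have himg : ∀ t ∈ s.powersetCard k, ∏ i ∈ insert a t, f i = f a * ∏ i ∈ t, f i := by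
          intro t ht
          have hat : a ∉ t := fun h => ha ((Finset.mem_powersetCard.mp ht).1 h)
          rw [Finset.prod_insert hat]
        rw [Finset.sum_congr rfl himg, ← Finset.mul_sum, Finset.sum_insert ha]
        have key1 := ih hfs (k+1)
        have e2 := ih hfs k
        have key2 : ((k+1).factorial : ℝ) * (f a * ∑ t ∈ s.powersetCard k, ∏ i ∈ t, f i)
            ≤ ((k:ℝ)+1) * (f a * (∑ i ∈ s, f i) ^ k) := by
          have hfac : ((k+1).factorial : ℝ) = ((k:ℝ)+1) * (k.factorial : ℝ) := by
            rw [Nat.factorial_succ]; push_cast; ring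
          rw [hfac]
          have := mul_le_mul_of_nonneg_left e2 hfa
          nlinarith [(Nat.cast_pos (α := ℝ)).mpr (Nat.factorial_pos k)]
        calc ((k+1).factorial : ℝ) * ((∑ t ∈ s.powersetCard (k+1), ∏ i ∈ t, f i)
                + f a * ∑ t ∈ s.powersetCard k, ∏ i ∈ t, f i)
            ≤ (∑ i ∈ s, f i) ^ (k+1) + ((k:ℝ)+1) * (f a * (∑ i ∈ s, f i) ^ k) := by
              rw [mul_add]; exact add_le_add key1 key2
          _ ≤ ((∑ i ∈ s, f i) + f a) ^ (k+1) := binom_aux k _ _ hSnn hfa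
          _ = (f a + ∑ i ∈ s, f i) ^ (k+1) := by ring
      · intro t ht t' ht' h
        have hat : a ∉ t := fun hmem => ha ((Finset.mem_powersetCard.mp ht).1 hmem)
        have hat' : a ∉ t' := fun hmem => ha ((Finset.mem_powersetCard.mp ht').1 hmem)
        have := congrArg (Finset.erase · a) h
        simpa [Finset.erase_insert hat, Finset.erase_insert hat'] using this
      · rw [Finset.disjoint_left]
        intro t ht ht'
        obtain ⟨u, hu, rfl⟩ := Finset.mem_image.mp ht'
        exact ha ((Finset.mem_powersetCard.mp ht).1 (Finset.mem_insert_self a u))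

private lemma key_ineq (n : ℕ) (hn : 1 ≤ n) (μ : Fin n → ℝ) (hμ : ∀ i, 0 < μ i) :
    ∑ i, (μ i)⁻¹ ≤
      (1 / ((n - 1).factorial : ℝ)) * (∑ i, μ i) ^ (n - 1) * (∏ i, μ i)⁻¹ := by
  have hP : 0 < ∏ i, μ i := Finset.prod_pos fun i _ => hμ i
  have hfact : (0:ℝ) < ((n-1).factorial : ℝ) := Nat.cast_pos.mpr (Nat.factorial_pos _)
  have herase : ∀ i : Fin n, ∏ j ∈ Finset.univ.erase i, μ j = (∏ j, μ j) * (μ i)⁻¹ := by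
    intro i
    rw [← Finset.mul_prod_erase Finset.univ μ (Finset.mem_univ i)]
    field_simp [(hμ i).ne']
  have hsub : Finset.univ.image (fun i : Fin n => Finset.univ.erase i)
      ⊆ Finset.univ.powersetCard (n-1) := by
    intro t ht
    obtain ⟨i, _, rfl⟩ := Finset.mem_image.mp ht
    rw [Finset.mem_powersetCard]
    refine ⟨Finset.subset_univ _, ?_⟩
    rw [Finset.card_erase_of_mem (Finset.mem_univ i), Finset.card_univ, Fintype.card_fin]
  have hsum1 : ∑ i : Fin n, ∏ j ∈ Finset.univ.erase i, μ j
      ≤ ∑ t ∈ Finset.univ.powersetCard (n-1), ∏ j ∈ t, μ j := by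
    rw [← Finset.sum_image (f := fun t => ∏ j ∈ t, μ j)
      (g := fun i : Fin n => Finset.univ.erase i) ?_]
    · apply Finset.sum_le_sum_of_subset_of_nonneg hsub
      intro t _ _
      exact Finset.prod_nonneg fun j _ => (hμ j).le
    · intro i _ j _ h
      by_contra hne
      have h' : Finset.univ.erase i = Finset.univ.erase j := h
      have hij : i ∈ Finset.univ.erase j := Finset.mem_erase.mpr ⟨hne, Finset.mem_univ i⟩
      rw [← h'] at hij
      exact (Finset.mem_erase.mp hij).1 rfl
  have hmain := esymm_le μ Finset.univ (fun i _ => (hμ i).le) (n-1)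
  have h2 : ((n-1).factorial : ℝ) * ((∏ j, μ j) * ∑ i, (μ i)⁻¹) ≤ (∑ i, μ i) ^ (n-1) := by
    have h3 : ∑ i : Fin n, ∏ j ∈ Finset.univ.erase i, μ j
        = (∏ j, μ j) * ∑ i, (μ i)⁻¹ := by
      rw [Finset.mul_sum]
      exact Finset.sum_congr rfl fun i _ => herase i
    rw [← h3]
    exact (mul_le_mul_of_nonneg_left hsum1 hfact.le).trans hmain
  have heq : ∑ i, (μ i)⁻¹
      = (((n-1).factorial : ℝ) * ((∏ j, μ j) * ∑ i, (μ i)⁻¹))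
        / (((n-1).factorial : ℝ) * ∏ j, μ j) := by
    field_simp
  have hT : (1 / ((n - 1).factorial : ℝ)) * (∑ i, μ i) ^ (n - 1) * (∏ i, μ i)⁻¹
      = (∑ i, μ i) ^ (n-1) / (((n-1).factorial : ℝ) * ∏ j, μ j) := by
    field_simp
  rw [heq, hT]
  gcongr <;> positivity

/-- **Pointwise linear-algebra inequality for two Hermitian metrics.**
Let `n ≥ 1` and let `A`, `B` be positive-definite Hermitian `n×n` complex matrices. Then
`trace(B⁻¹A)`, `trace(A⁻¹B)`, `det(A)` and `det(B)` are positive real numbers, and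
`trace(B⁻¹A) ≤ (1/(n−1)!) · (trace(A⁻¹B))^(n−1) · det(A)/det(B)`. -/
theorem trace_det_metric_inequality
    (n : ℕ) (hn : 1 ≤ n) (A B : Matrix (Fin n) (Fin n) ℂ)
    (hA : A.PosDef) (hB : B.PosDef) :
    ((B⁻¹ * A).trace.im = 0 ∧ 0 < (B⁻¹ * A).trace.re) ∧
      ((A⁻¹ * B).trace.im = 0 ∧ 0 < (A⁻¹ * B).trace.re) ∧
      (A.det.im = 0 ∧ 0 < A.det.re) ∧
      (B.det.im = 0 ∧ 0 < B.det.re) ∧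
      (B⁻¹ * A).trace.re ≤
        (1 / ((n - 1).factorial : ℝ)) * ((A⁻¹ * B).trace.re) ^ (n - 1) *
          (A.det.re / B.det.re) := by
  classical
  have hne : Nonempty (Fin n) := Fin.pos_iff_nonempty.mp hn
  -- determinants
  have hdetA : (0:ℂ) < A.det := hA.det_pos
  have hdetB : (0:ℂ) < B.det := hB.det_pos
  obtain ⟨hare, haim⟩ := Complex.lt_def.mp hdetA
  obtain ⟨hbre, hbim⟩ := Complex.lt_def.mp hdetB
  simp only [Complex.zero_re, Complex.zero_im] at hare haim hbre hbim
  set a := A.det.re with ha_def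
  set b := B.det.re with hb_def
  have hAdet : A.det = (a:ℂ) := Complex.ext rfl (by simp [← haim])
  have hBdet : B.det = (b:ℂ) := Complex.ext rfl (by simp [← hbim])
  have hdetAne : A.det ≠ 0 := hdetA.ne'
  have hdetBne : B.det ≠ 0 := hdetB.ne'
  -- square root of A⁻¹
  have hAinv : (A⁻¹).PosDef := hA.inv
  set S := (open scoped MatrixOrder in CFC.sqrt A⁻¹) with hS_def
  have hSS : S * S = A⁻¹ :=
    open scoped MatrixOrder in CFC.sqrt_mul_sqrt_self _ hAinv.posSemidef.nonneg
  have hSH : Sᴴ = S := open scoped MatrixOrder in (CFC.sqrt_nonneg A⁻¹).posSemidef.1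
  have hdetAinvne : (A⁻¹).det ≠ 0 := by
    rw [Matrix.det_nonsing_inv, Ring.inverse_eq_inv']
    exact inv_ne_zero hdetAne
  have hSdet : S.det ≠ 0 := by
    intro h
    apply hdetAinvne
    rw [← hSS, Matrix.det_mul, h, mul_zero]
  -- the matrix M
  have hMps : (S * B * S).PosSemidef := by
    have := hB.posSemidef.mul_mul_conjTranspose_same S
    rwa [hSH] at this
  have hMH : (S * B * S).IsHermitian := hMps.1
  set μ := hMH.eigenvalues with hμ_def
  set U := (hMH.eigenvectorUnitary : Matrix (Fin n) (Fin n) ℂ) with hU_def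
  have hspec : S * B * S = U * Matrix.diagonal (RCLike.ofReal ∘ μ) * star U :=
    hMH.spectral_theorem
  have hU1 : U * star U = 1 := Matrix.mem_unitaryGroup_iff.mp hMH.eigenvectorUnitary.2
  have hU2 : star U * U = 1 := Matrix.mem_unitaryGroup_iff'.mp hMH.eigenvectorUnitary.2
  have hUinv : U⁻¹ = star U := Matrix.inv_eq_left_inv hU2
  have hsUinv : (star U)⁻¹ = U := Matrix.inv_eq_left_inv hU1
  -- traces of M, M⁻¹ and det of M via eigenvalues
  have htraceM : (S * B * S).trace = ((∑ i, μ i : ℝ) : ℂ) := by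
    rw [hspec, Matrix.trace_mul_comm, ← Matrix.mul_assoc, hU2, Matrix.one_mul,
      Matrix.trace_diagonal]
    push_cast
    rfl
  have hdetM : (S * B * S).det = ((∏ i, μ i : ℝ) : ℂ) := by
    rw [hMH.det_eq_prod_eigenvalues]
    push_cast
    rfl
  have hdetMne : (S * B * S).det ≠ 0 := by
    rw [Matrix.det_mul, Matrix.det_mul]
    exact mul_ne_zero (mul_ne_zero hSdet hdetBne) hSdet
  have hμpos : ∀ i, 0 < μ i := by
    intro i
    rcases lt_or_eq_of_le (hMps.eigenvalues_nonneg i) with h | h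
    · exact h
    · exfalso
      apply hdetMne
      rw [hdetM]
      rw [Complex.ofReal_eq_zero]
      exact Finset.prod_eq_zero (Finset.mem_univ i) h.symm
  have hDinv : (Matrix.diagonal (RCLike.ofReal ∘ μ) : Matrix (Fin n) (Fin n) ℂ)⁻¹
      = Matrix.diagonal (fun i => ((μ i : ℂ))⁻¹) := by
    apply Matrix.inv_eq_right_inv
    rw [Matrix.diagonal_mul_diagonal]
    have hone : (fun i => (RCLike.ofReal ∘ μ) i * ((μ i : ℂ))⁻¹) = fun _ => (1:ℂ) := by
      funext i
      simp only [Function.comp_apply]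
      exact mul_inv_cancel₀ (Complex.ofReal_ne_zero.mpr (hμpos i).ne')
    rw [hone, Matrix.diagonal_one]
  have hMinv : (S * B * S)⁻¹ = U * Matrix.diagonal (fun i => ((μ i : ℂ))⁻¹) * star U := by
    rw [hspec, Matrix.mul_inv_rev, Matrix.mul_inv_rev, hUinv, hsUinv, hDinv, ← Matrix.mul_assoc]
  have htraceMinv : (S * B * S)⁻¹.trace = ((∑ i, (μ i)⁻¹ : ℝ) : ℂ) := by
    rw [hMinv, Matrix.trace_mul_comm, ← Matrix.mul_assoc, hU2, Matrix.one_mul,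
      Matrix.trace_diagonal]
    push_cast
    rfl
  -- relate products to determinants
  have hdetrel : ((∏ i, μ i : ℝ) : ℂ) = (b:ℂ) / (a:ℂ) := by
    rw [← hdetM, Matrix.det_mul, Matrix.det_mul]
    have hSSdet : S.det * S.det = (A⁻¹).det := by rw [← Matrix.det_mul, hSS]
    have : S.det * B.det * S.det = (A⁻¹).det * B.det := by
      rw [← hSSdet]; ring
    rw [this, Matrix.det_nonsing_inv, Ring.inverse_eq_inv', hAdet, hBdet]
    field_simp
  have hprod : (∏ i, μ i : ℝ) = b / a := by
    have := hdetrel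
    rw [show ((b:ℂ)/(a:ℂ)) = ((b/a : ℝ) : ℂ) by push_cast; ring] at this
    exact_mod_cast this
  -- relate traces
  have htrAB : (A⁻¹ * B).trace = ((∑ i, μ i : ℝ) : ℂ) := by
    rw [← htraceM, ← hSS]
    exact (Matrix.trace_mul_cycle S B S).symm
  have hA2 : A = S⁻¹ * S⁻¹ := by
    rw [← Matrix.mul_inv_rev, hSS,
      Matrix.nonsing_inv_nonsing_inv A (isUnit_iff_ne_zero.mpr hdetAne)]
  have htrBA : (B⁻¹ * A).trace = ((∑ i, (μ i)⁻¹ : ℝ) : ℂ) := by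
    rw [← htraceMinv]
    have h1 : (S * B * S)⁻¹ = S⁻¹ * B⁻¹ * S⁻¹ := by
      rw [Matrix.mul_inv_rev, Matrix.mul_inv_rev, ← Matrix.mul_assoc]
    rw [h1, Matrix.trace_mul_cycle S⁻¹ B⁻¹ S⁻¹, ← hA2, Matrix.trace_mul_comm]
  -- positivity of the trace sums
  have hsumpos : 0 < ∑ i, μ i :=
    Finset.sum_pos (fun i _ => hμpos i) Finset.univ_nonempty
  have hsuminvpos : 0 < ∑ i, (μ i)⁻¹ :=
    Finset.sum_pos (fun i _ => inv_pos.mpr (hμpos i)) Finset.univ_nonempty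
  refine ⟨⟨by rw [htrBA]; simp, by rw [htrBA]; simpa using hsuminvpos⟩,
    ⟨by rw [htrAB]; simp, by rw [htrAB]; simpa using hsumpos⟩,
    ⟨haim.symm, hare⟩, ⟨hbim.symm, hbre⟩, ?_⟩
  have hre1 : (B⁻¹ * A).trace.re = ∑ i, (μ i)⁻¹ := by rw [htrBA]; simp
  have hre2 : (A⁻¹ * B).trace.re = ∑ i, μ i := by rw [htrAB]; simp
  rw [hre1, hre2]
  have hb0 : 0 < b := hbre
  have ha0 : 0 < a := hare
  have hdiv : a / b = (∏ i, μ i)⁻¹ := by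
    rw [hprod]
    field_simp
  rw [hdiv]
  exact key_ineq n hn μ hμpos
end

section
/- Let n ≥ 1, let A and B be positive-definite Hermitian n×n complex matrices, and let C₁ > 0 and K > 0 be real numbers such that trace(A⁻¹B) ≤ C₁ and det(A) ≤ K·det(B) (all these quantities being positive reals). Then for every vector x ∈ ℂⁿ, (1/C₁)·(x*Bx) ≤ x*Ax ≤ (C₁^{n−1}·K/(n−1)!)·(x*Bx). -/
open Matrix ComplexOrder

/-- AM–GM with factorial: `m! * ∏ f ≤ (∑ f)^m` for nonnegative `f`. -/
lemma factorial_mul_prod_le_sum_pow {ι : Type*} (s : Finset ι) (f : ι → ℝ)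
    (hf : ∀ i ∈ s, 0 ≤ f i) :
    (s.card.factorial : ℝ) * ∏ i ∈ s, f i ≤ (∑ i ∈ s, f i) ^ s.card := by
  classical
  induction s using Finset.cons_induction with
  | empty => simp
  | cons a s ha ih =>
    have hfa : 0 ≤ f a := hf a (Finset.mem_cons_self a s)
    have hfs : ∀ i ∈ s, 0 ≤ f i := fun i hi => hf i (Finset.mem_cons.2 (Or.inr hi))
    have hP : 0 ≤ ∏ i ∈ s, f i := Finset.prod_nonneg hfs
    have hT : 0 ≤ ∑ i ∈ s, f i := Finset.sum_nonneg hfs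
    rw [Finset.card_cons, Finset.prod_cons, Finset.sum_cons]
    set m := s.card with hm
    set T := ∑ i ∈ s, f i with hTdef
    have step : ((m + 1 : ℕ) : ℝ) * f a * T ^ m ≤ (f a + T) ^ (m + 1) := by
      have h := add_pow (f a) T (m + 1)
      have hmem : 1 ∈ Finset.range (m + 1 + 1) := by
        simp
      have hterm : ∀ k ∈ Finset.range (m + 1 + 1),
          0 ≤ f a ^ k * T ^ (m + 1 - k) * ((m + 1).choose k : ℝ) := by
        intro k _
        positivity
      have hsingle := Finset.single_le_sum hterm hmem
      rw [← h] at hsingle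
      calc ((m + 1 : ℕ) : ℝ) * f a * T ^ m
          = f a ^ 1 * T ^ (m + 1 - 1) * ((m + 1).choose 1 : ℝ) := by
            rw [Nat.choose_one_right]; push_cast; ring
        _ ≤ (f a + T) ^ (m + 1) := hsingle
    calc ((m + 1).factorial : ℝ) * (f a * ∏ i ∈ s, f i)
        = ((m + 1 : ℕ) : ℝ) * f a * ((m.factorial : ℝ) * ∏ i ∈ s, f i) := by
          rw [Nat.factorial_succ]; push_cast; ring
      _ ≤ ((m + 1 : ℕ) : ℝ) * f a * T ^ m := by
          have hmul : 0 ≤ ((m + 1 : ℕ) : ℝ) * f a := by positivity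
          exact mul_le_mul_of_nonneg_left (ih hfs) hmul
      _ ≤ (f a + T) ^ (m + 1) := step

/-- Conjugating a quadratic form. -/
lemma conj_dot {n : ℕ} (W N : Matrix (Fin n) (Fin n) ℂ) (y : Fin n → ℂ) :
    star y ⬝ᵥ (W * N * star W) *ᵥ y
      = star (star W *ᵥ y) ⬝ᵥ N *ᵥ (star W *ᵥ y) := by
  conv_lhs => rw [← mulVec_mulVec, ← mulVec_mulVec, dotProduct_mulVec]
  rw [star_mulVec, star_eq_conjTranspose, conjTranspose_conjTranspose]

/-- Quadratic form of a Hermitian matrix is controlled by eigenvalue bounds. -/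
lemma quad_form_eigenvalue_bounds {n : ℕ} {M : Matrix (Fin n) (Fin n) ℂ}
    (hM : M.IsHermitian) {a b : ℝ}
    (ha : ∀ i, a ≤ hM.eigenvalues i) (hb : ∀ i, hM.eigenvalues i ≤ b)
    (y : Fin n → ℂ) :
    a * (star y ⬝ᵥ y).re ≤ (star y ⬝ᵥ M *ᵥ y).re ∧
      (star y ⬝ᵥ M *ᵥ y).re ≤ b * (star y ⬝ᵥ y).re := by
  classical
  have hUU : (hM.eigenvectorUnitary : Matrix (Fin n) (Fin n) ℂ)
      * star (hM.eigenvectorUnitary : Matrix (Fin n) (Fin n) ℂ) = 1 :=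
    (Matrix.mem_unitaryGroup_iff).mp hM.eigenvectorUnitary.2
  have key1 : star y ⬝ᵥ M *ᵥ y
      = star (star (hM.eigenvectorUnitary : Matrix (Fin n) (Fin n) ℂ) *ᵥ y) ⬝ᵥ
        (diagonal (RCLike.ofReal ∘ hM.eigenvalues) : Matrix (Fin n) (Fin n) ℂ) *ᵥ
        (star (hM.eigenvectorUnitary : Matrix (Fin n) (Fin n) ℂ) *ᵥ y) := by
    conv_lhs => rw [hM.spectral_theorem]
    exact conj_dot _ _ y
  have key2 : star y ⬝ᵥ y
      = star (star (hM.eigenvectorUnitary : Matrix (Fin n) (Fin n) ℂ) *ᵥ y) ⬝ᵥ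
        (star (hM.eigenvectorUnitary : Matrix (Fin n) (Fin n) ℂ) *ᵥ y) := by
    have h := conj_dot (hM.eigenvectorUnitary : Matrix (Fin n) (Fin n) ℂ) 1 y
    rw [mul_one, hUU, one_mulVec, one_mulVec] at h
    exact h
  set z : Fin n → ℂ := star (hM.eigenvectorUnitary : Matrix (Fin n) (Fin n) ℂ) *ᵥ y with hz
  have hdiag : (star z ⬝ᵥ (diagonal (RCLike.ofReal ∘ hM.eigenvalues) :
      Matrix (Fin n) (Fin n) ℂ) *ᵥ z).re
      = ∑ i, hM.eigenvalues i * Complex.normSq (z i) := by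
    rw [dotProduct, Complex.re_sum]
    refine Finset.sum_congr rfl fun i _ => ?_
    rw [mulVec_diagonal, Function.comp_apply, Pi.star_apply]
    show (star (z i) * (((hM.eigenvalues i : ℝ) : ℂ) * z i)).re = _
    rw [Complex.star_def, mul_left_comm, ← Complex.normSq_eq_conj_mul_self,
      ← Complex.ofReal_mul, Complex.ofReal_re]
  have hzz : (star z ⬝ᵥ z).re = ∑ i, Complex.normSq (z i) := by
    rw [dotProduct, Complex.re_sum]
    refine Finset.sum_congr rfl fun i _ => ?_
    rw [Pi.star_apply, Complex.star_def, ← Complex.normSq_eq_conj_mul_self,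
      Complex.ofReal_re]
  rw [key1, key2, hdiag, hzz]
  constructor
  · rw [Finset.mul_sum]
    exact Finset.sum_le_sum fun i _ =>
      mul_le_mul_of_nonneg_right (ha i) (Complex.normSq_nonneg _)
  · rw [Finset.mul_sum]
    exact Finset.sum_le_sum fun i _ =>
      mul_le_mul_of_nonneg_right (hb i) (Complex.normSq_nonneg _)

/-- **Two-sided metric comparison from trace and volume bounds.**
Let `n ≥ 1`, let `A`, `B` be positive-definite Hermitian `n×n` complex matrices, and let
`C₁ > 0`, `K > 0` be reals with `trace(A⁻¹B) ≤ C₁` and `det(A) ≤ K·det(B)` (all these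
quantities being positive reals). Then for every `x ∈ ℂⁿ`,
`(1/C₁)·(x*Bx) ≤ x*Ax ≤ (C₁^(n−1)·K/(n−1)!)·(x*Bx)`. -/
theorem two_sided_metric_comparison
    (n : ℕ) (hn : 1 ≤ n) (A B : Matrix (Fin n) (Fin n) ℂ)
    (hA : A.PosDef) (hB : B.PosDef)
    (C₁ K : ℝ) (hC₁ : 0 < C₁) (hK : 0 < K)
    (htrace : (A⁻¹ * B).trace.re ≤ C₁)
    (hdet : A.det.re ≤ K * B.det.re) :
    ∀ x : Fin n → ℂ,
      (1 / C₁) * (star x ⬝ᵥ B.mulVec x).re ≤ (star x ⬝ᵥ A.mulVec x).re ∧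
      (star x ⬝ᵥ A.mulVec x).re ≤
        (C₁ ^ (n - 1) * K / ((n - 1).factorial : ℝ)) * (star x ⬝ᵥ B.mulVec x).re := by
  classical
  intro x
  -- square root of A
  set S : Matrix (Fin n) (Fin n) ℂ := (by open scoped MatrixOrder in exact CFC.sqrt A) with hSdef
  have hSps : S.PosSemidef := by open scoped MatrixOrder in exact (CFC.sqrt_nonneg A).posSemidef
  have hSH : S.IsHermitian := hSps.1
  have hSS : S * S = A := by open scoped MatrixOrder in exact CFC.sqrt_mul_sqrt_self A hA.posSemidef.nonneg
  have hdetA : (0 : ℂ) < A.det := hA.det_pos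
  have hdetS : IsUnit S.det := by
    have h2 : S.det * S.det = A.det := by rw [← det_mul, hSS]
    have hne : S.det ≠ 0 := by
      intro h0
      rw [h0, mul_zero] at h2
      exact hdetA.ne' h2.symm
    exact hne.isUnit
  have hSinv : S * S⁻¹ = 1 := mul_nonsing_inv S hdetS
  have hinvS : S⁻¹ * S = 1 := nonsing_inv_mul S hdetS
  have hSiH : (S⁻¹).IsHermitian := hSH.inv
  -- the matrix M = S⁻¹ B S⁻¹
  have hMH : (S⁻¹ * B * S⁻¹).IsHermitian := by
    have h := isHermitian_conjTranspose_mul_mul S⁻¹ hB.1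
    rwa [hSiH.eq] at h
  have hMpd : (S⁻¹ * B * S⁻¹).PosDef := by
    refine .of_dotProduct_mulVec_pos hMH fun v hv => ?_
    have hvz : S⁻¹ *ᵥ v ≠ 0 := by
      intro h0
      have h1 : S *ᵥ (S⁻¹ *ᵥ v) = 0 := by rw [h0, mulVec_zero]
      rw [mulVec_mulVec, hSinv, one_mulVec] at h1
      exact hv h1
    have key : star v ⬝ᵥ (S⁻¹ * B * S⁻¹) *ᵥ v
        = star (S⁻¹ *ᵥ v) ⬝ᵥ B *ᵥ (S⁻¹ *ᵥ v) := by
      conv_lhs => rw [← mulVec_mulVec, ← mulVec_mulVec, dotProduct_mulVec]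
      rw [star_mulVec, hSiH.eq]
    rw [key]
    exact hB.dotProduct_mulVec_pos hvz
  set M : Matrix (Fin n) (Fin n) ℂ := S⁻¹ * B * S⁻¹ with hMdef
  set μ : Fin n → ℝ := hMpd.1.eigenvalues with hμ
  have hμpos : ∀ i, 0 < μ i := hMpd.eigenvalues_pos
  -- trace of M
  have htrM : M.trace = (A⁻¹ * B).trace := by
    rw [hMdef, ← hSS, Matrix.mul_inv_rev, trace_mul_cycle]
  have hsumμ : ∑ i, μ i = M.trace.re := by
    have h1 : M.trace = ∑ i, (μ i : ℂ) := by
      conv_lhs => rw [hMpd.1.spectral_theorem, Unitary.conjStarAlgAut_apply]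
      rw [trace_mul_cycle, (Matrix.mem_unitaryGroup_iff').mp hMpd.1.eigenvectorUnitary.2,
        one_mul, trace_diagonal]
      simp [hμ]
    rw [h1, Complex.re_sum]
    simp
  have hsum_le : ∑ i, μ i ≤ C₁ := by rw [hsumμ, htrM]; exact htrace
  -- determinant identities
  set α : ℝ := ∏ i, hA.1.eigenvalues i with hα
  set β : ℝ := ∏ i, hB.1.eigenvalues i with hβ
  have hαpos : 0 < α := Finset.prod_pos fun i _ => hA.eigenvalues_pos i
  have hβpos : 0 < β := Finset.prod_pos fun i _ => hB.eigenvalues_pos i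
  have hdetAα : A.det = (α : ℂ) := by
    rw [hA.1.det_eq_prod_eigenvalues, hα, Complex.ofReal_prod]; rfl
  have hdetBβ : B.det = (β : ℂ) := by
    rw [hB.1.det_eq_prod_eigenvalues, hβ, Complex.ofReal_prod]; rfl
  have hdet' : α ≤ K * β := by
    have h1 : A.det.re = α := by rw [hdetAα, Complex.ofReal_re]
    have h2 : B.det.re = β := by rw [hdetBβ, Complex.ofReal_re]
    rwa [h1, h2] at hdet
  have hprodμ : ∏ i, μ i = β * α⁻¹ := by
    have h1 : M.det = ((∏ i, μ i : ℝ) : ℂ) := by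
      rw [hMpd.1.det_eq_prod_eigenvalues, Complex.ofReal_prod]; rfl
    have h2 : M.det = B.det * A.det⁻¹ := by
      rw [hMdef, det_mul, det_mul, det_nonsing_inv, Ring.inverse_eq_inv', ← hSS, det_mul,
        mul_inv]
      ring
    have h3 : ((∏ i, μ i : ℝ) : ℂ) = ((β * α⁻¹ : ℝ) : ℂ) := by
      rw [← h1, h2, hdetAα, hdetBβ]
      push_cast
      ring
    exact_mod_cast h3
  have hprod_ge : (1 : ℝ) / K ≤ ∏ i, μ i := by
    rw [hprodμ, ← div_eq_mul_inv, div_le_div_iff₀ hK hαpos, one_mul]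
    linarith [hdet']
  -- eigenvalue bounds
  have hb_i : ∀ i, μ i ≤ C₁ := fun i =>
    le_trans (Finset.single_le_sum (fun j _ => (hμpos j).le) (Finset.mem_univ i)) hsum_le
  set a : ℝ := ((n - 1).factorial : ℝ) / (C₁ ^ (n - 1) * K) with hadef
  have hfactpos : (0 : ℝ) < ((n - 1).factorial : ℝ) := by
    exact_mod_cast Nat.factorial_pos _
  have hapos : 0 < a := div_pos hfactpos (by positivity)
  have ha_i : ∀ i, a ≤ μ i := by
    intro i
    have hPpos : 0 < ∏ j ∈ Finset.univ.erase i, μ j := Finset.prod_pos fun j _ => hμpos j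
    have hcard : (Finset.univ.erase i).card = n - 1 := by
      rw [Finset.card_erase_of_mem (Finset.mem_univ i), Finset.card_univ, Fintype.card_fin]
    have hfac : ((n - 1).factorial : ℝ) * ∏ j ∈ Finset.univ.erase i, μ j ≤ C₁ ^ (n - 1) := by
      have h1 := factorial_mul_prod_le_sum_pow (Finset.univ.erase i) μ
        (fun j _ => (hμpos j).le)
      rw [hcard] at h1
      refine h1.trans ?_
      have hsub : ∑ j ∈ Finset.univ.erase i, μ j ≤ C₁ :=
        le_trans (Finset.sum_le_sum_of_subset_of_nonneg (Finset.subset_univ _)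
          (fun j _ _ => (hμpos j).le)) hsum_le
      exact pow_le_pow_left₀ (Finset.sum_nonneg fun j _ => (hμpos j).le) hsub _
    have hμP : μ i * ∏ j ∈ Finset.univ.erase i, μ j = ∏ j, μ j :=
      Finset.mul_prod_erase Finset.univ μ (Finset.mem_univ i)
    have h1 : a * ∏ j ∈ Finset.univ.erase i, μ j ≤ 1 / K := by
      rw [hadef, div_mul_eq_mul_div, div_le_div_iff₀ (by positivity) hK, one_mul]
      exact mul_le_mul_of_nonneg_right hfac hK.le
    have h2 : a * ∏ j ∈ Finset.univ.erase i, μ j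
        ≤ μ i * ∏ j ∈ Finset.univ.erase i, μ j := by
      rw [hμP]; exact h1.trans hprod_ge
    exact le_of_mul_le_mul_right h2 hPpos
  -- transfer the quadratic form bounds
  obtain ⟨hlow, hhigh⟩ := quad_form_eigenvalue_bounds hMpd.1 ha_i hb_i (S *ᵥ x)
  have hxAx : star x ⬝ᵥ A *ᵥ x = star (S *ᵥ x) ⬝ᵥ (S *ᵥ x) := by
    conv_lhs => rw [← hSS, ← mulVec_mulVec, dotProduct_mulVec]
    rw [star_mulVec, hSH.eq]
  have hBSM : B = S * M * S := by
    rw [hMdef, ← mul_assoc, ← mul_assoc, hSinv, one_mul, mul_assoc, hinvS, mul_one]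
  have hxBx : star x ⬝ᵥ B *ᵥ x = star (S *ᵥ x) ⬝ᵥ M *ᵥ (S *ᵥ x) := by
    conv_lhs => rw [hBSM, ← mulVec_mulVec, ← mulVec_mulVec, dotProduct_mulVec]
    rw [star_mulVec, hSH.eq]
  constructor
  · rw [hxBx, hxAx]
    rw [div_mul_eq_mul_div, div_le_iff₀ hC₁, one_mul]
    linarith [hhigh]
  · rw [hxAx, hxBx]
    have hconst : C₁ ^ (n - 1) * K / ((n - 1).factorial : ℝ) = a⁻¹ := by
      rw [hadef, inv_div]
    rw [hconst]
    calc (star (S *ᵥ x) ⬝ᵥ (S *ᵥ x)).re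
        = a⁻¹ * (a * (star (S *ᵥ x) ⬝ᵥ (S *ᵥ x)).re) := by
          field_simp
      _ ≤ a⁻¹ * (star (S *ᵥ x) ⬝ᵥ M *ᵥ (S *ᵥ x)).re :=
          mul_le_mul_of_nonneg_left hlow (inv_nonneg.mpr hapos.le)
end
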